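/- Let N ≥ 10 and let h ∈ C²((0,1]) with 0 ≤ h' (h increasing) and 0 ≤ h ≤ 1 on (0,1]. Define Φ(r) = r^{2√(N−1)}(1 + ∫₀^r h) and u_r < 0 by Φ' = (N−1) r^{N−3} u_r². Then Φ'' > 0 on (0,1], the function r ↦ r^{2N−2} u_r(r)² is increasing, and |u_r(r)| ≤ D_N r^{−N/2+√(N−1)+1} for all r ∈ (0,1], where D_N depends only on N. -/

import Mathlib

open MeasureTheory Set intervalIntegral
open Topology Filter

/-- For `N ≥ 10`, `h` increasing with `0 ≤ h ≤ 1`, and `Φ, u_r` as in the family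
construction: `Φ'' > 0`, `r ↦ r^{2N−2} u_r²` is increasing, and
`|u_r(r)| ≤ D_N r^{−N/2+√(N−1)+1}` with `D_N` depending only on `N`. -/
theorem family_second_derivative (N : ℕ) (hN : 10 ≤ N) :
    ∃ D : ℝ, 0 < D ∧
      ∀ h h' Φ Φ' Φ'' u_r : ℝ → ℝ,
        ContDiffOn ℝ 2 h (Set.Ioc (0 : ℝ) 1) →
        (∀ s ∈ Set.Ioc (0 : ℝ) 1, HasDerivWithinAt h (h' s) (Set.Ioc (0 : ℝ) 1) s) →
        (∀ s ∈ Set.Ioc (0 : ℝ) 1, 0 ≤ h' s) →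
        (∀ s ∈ Set.Ioc (0 : ℝ) 1, 0 ≤ h s ∧ h s ≤ 1) →
        IntegrableOn h (Set.Ioo (0 : ℝ) 1) →
        (∀ r ∈ Set.Ioc (0 : ℝ) 1,
          Φ r = r ^ (2 * Real.sqrt ((N : ℝ) - 1)) * (1 + ∫ s in (0 : ℝ)..r, h s)) →
        (∀ r ∈ Set.Ioc (0 : ℝ) 1, HasDerivWithinAt Φ (Φ' r) (Set.Ioc (0 : ℝ) 1) r) →
        (∀ r ∈ Set.Ioc (0 : ℝ) 1, HasDerivWithinAt Φ' (Φ'' r) (Set.Ioc (0 : ℝ) 1) r) →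
        (∀ r ∈ Set.Ioc (0 : ℝ) 1, u_r r < 0) →
        (∀ r ∈ Set.Ioc (0 : ℝ) 1, Φ' r = ((N : ℝ) - 1) * r ^ (N - 3) * u_r r ^ 2) →
        (∀ r ∈ Set.Ioc (0 : ℝ) 1, 0 < Φ'' r) ∧
          StrictMonoOn (fun r => r ^ (2 * N - 2) * u_r r ^ 2) (Set.Ioc (0 : ℝ) 1) ∧
          ∀ r ∈ Set.Ioc (0 : ℝ) 1,
            |u_r r| ≤ D * r ^ (-(N : ℝ) / 2 + Real.sqrt ((N : ℝ) - 1) + 1) := by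
  have hN9 : (9:ℝ) ≤ (N:ℝ) - 1 := by
    have : (10:ℝ) ≤ (N:ℝ) := by exact_mod_cast hN
    linarith
  have hNR : (0:ℝ) < (N:ℝ) - 1 := by linarith
  set a : ℝ := 2 * Real.sqrt ((N : ℝ) - 1) with ha_def
  have hs3 : (3:ℝ) ≤ Real.sqrt ((N:ℝ) - 1) := by
    have : Real.sqrt 9 ≤ Real.sqrt ((N:ℝ)-1) := Real.sqrt_le_sqrt hN9
    rwa [show (9:ℝ) = 3^2 by norm_num, Real.sqrt_sq (by norm_num : (0:ℝ) ≤ 3)] at this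
  have ha6 : (6:ℝ) ≤ a := by rw [ha_def]; linarith
  set G : ℝ := 2 * a + 1 with hG_def
  have hGpos : 0 < G := by linarith
  refine ⟨Real.sqrt (G / ((N:ℝ) - 1)), Real.sqrt_pos.mpr (div_pos hGpos hNR), ?_⟩
  intro h h' Φ Φ' Φ'' u_r hC2 hdh hh'0 hh01 hInt hΦdef hdΦ hdΦ' hu_neg hΦ'def
  set S : Set ℝ := Set.Ioc (0:ℝ) 1 with hS_def
  set g : ℝ → ℝ := fun r => ∫ s in (0:ℝ)..r, h s with hg_def
  -- interval integrability
  have hII : ∀ r ∈ S, IntervalIntegrable h volume 0 r := by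
    intro r hr
    constructor
    · exact (hInt.mono_set (Set.Ioo_subset_Ioo le_rfl hr.2)).congr_set_ae Ioo_ae_eq_Ioc.symm
    · simp [Set.Ioc_eq_empty (not_lt.mpr hr.1.le)]
  -- bounds on g
  have hg0 : ∀ r ∈ S, 0 ≤ g r := by
    intro r hr
    show (0:ℝ) ≤ ∫ s in (0:ℝ)..r, h s
    rw [intervalIntegral.integral_of_le hr.1.le]
    exact setIntegral_nonneg measurableSet_Ioc
      (fun x hx => (hh01 x ⟨hx.1, hx.2.trans hr.2⟩).1)
  have hg_le : ∀ r ∈ S, g r ≤ r := by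
    intro r hr
    show (∫ s in (0:ℝ)..r, h s) ≤ r
    rw [intervalIntegral.integral_of_le hr.1.le]
    calc ∫ x in Set.Ioc (0:ℝ) r, h x ≤ ∫ _x in Set.Ioc (0:ℝ) r, (1:ℝ) := by
          apply setIntegral_mono_on (hII r hr).1 (integrableOn_const (by simp))
            measurableSet_Ioc
          exact fun x hx => (hh01 x ⟨hx.1, hx.2.trans hr.2⟩).2
      _ = r := by simp [Real.volume_Ioc, ENNReal.toReal_ofReal hr.1.le, hr.1.le]
  -- FTC : derivative of g within S
  have hgd : ∀ r ∈ S, HasDerivWithinAt g (h r) S r := by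
    intro r hr
    rcases eq_or_lt_of_le hr.2 with h1 | h1
    · -- r = 1
      have hmem : S ∈ 𝓝[Set.Iic r] r := by
        rw [mem_nhdsWithin]
        exact ⟨Set.Ioi 0, isOpen_Ioi, hr.1, fun x hx => ⟨hx.1, h1 ▸ hx.2⟩⟩
      have hmeas : StronglyMeasurableAtFilter h (𝓝[Set.Iic r] r) volume :=
        ⟨S, hmem, hC2.continuousOn.aestronglyMeasurable measurableSet_Ioc⟩
      have hcont : ContinuousWithinAt h (Set.Iic r) r :=
        (hC2.continuousOn r hr).mono_of_mem_nhdsWithin hmem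
      haveI : intervalIntegral.FTCFilter r (𝓝[Set.Iic r] r) (𝓝[Set.Iic r] r) :=
        intervalIntegral.FTCFilter.nhdsLeft r
      have hd : HasDerivWithinAt g (h r) (Set.Iic r) r :=
        intervalIntegral.integral_hasDerivWithinAt_right (hII r hr) hmeas hcont
      exact hd.mono (fun x hx => h1.symm ▸ hx.2)
    · -- r < 1 : interior point
      have hmem : S ∈ 𝓝 r := mem_nhds_iff.mpr ⟨Set.Ioo 0 1, fun x hx => ⟨hx.1, hx.2.le⟩,
        isOpen_Ioo, ⟨hr.1, h1⟩⟩
      have hmeas : StronglyMeasurableAtFilter h (𝓝 r) volume :=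
        ⟨S, hmem, hC2.continuousOn.aestronglyMeasurable measurableSet_Ioc⟩
      have hcont : ContinuousAt h r := (hC2.continuousOn r hr).continuousAt hmem
      exact (intervalIntegral.integral_hasDerivAt_right (hII r hr) hmeas hcont).hasDerivWithinAt
  -- first derivative formula
  set P : ℝ → ℝ := fun x => a * (x ^ (a-1) * (1 + g x)) + x ^ a * h x with hP_def
  have hPd : ∀ r ∈ S, HasDerivWithinAt Φ (P r) S r := by
    intro r hr
    have hr0 : r ≠ 0 := ne_of_gt hr.1
    have h1 : HasDerivWithinAt (fun x : ℝ => x ^ a * (1 + g x))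
        ((a * r ^ (a-1)) * (1 + g r) + r ^ a * h r) S r :=
      ((Real.hasDerivAt_rpow_const (Or.inl hr0)).hasDerivWithinAt).mul
        (((hasDerivWithinAt_const r S (1:ℝ)).add (hgd r hr)).congr_deriv (by ring))
    have h2 : HasDerivWithinAt (fun x : ℝ => x ^ a * (1 + g x)) (P r) S r := by
      convert h1 using 1; rw [hP_def]; ring
    exact h2.congr (fun x hx => hΦdef x hx) (hΦdef r hr)
  have hΦ'eq : ∀ r ∈ S, Φ' r = P r := by
    intro r hr
    have h1 := (hdΦ r hr).derivWithin (uniqueDiffOn_Ioc 0 1 r hr)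
    have h2 := (hPd r hr).derivWithin (uniqueDiffOn_Ioc 0 1 r hr)
    rw [← h1, ← h2]
  -- second derivative formula
  set Q : ℝ → ℝ := fun x => a * (((a-1) * x ^ (a-1-1)) * (1 + g x) + x ^ (a-1) * h x)
      + ((a * x ^ (a-1)) * h x + x ^ a * h' x) with hQ_def
  have hQd : ∀ r ∈ S, HasDerivWithinAt P (Q r) S r := by
    intro r hr
    have hr0 : r ≠ 0 := ne_of_gt hr.1
    have h1 : HasDerivWithinAt (fun x : ℝ => x ^ (a-1) * (1 + g x))
        (((a-1) * r ^ (a-1-1)) * (1 + g r) + r ^ (a-1) * h r) S r :=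
      ((Real.hasDerivAt_rpow_const (Or.inl hr0)).hasDerivWithinAt).mul
        (((hasDerivWithinAt_const r S (1:ℝ)).add (hgd r hr)).congr_deriv (by ring))
    have h2 : HasDerivWithinAt (fun x : ℝ => x ^ a * h x)
        ((a * r ^ (a-1)) * h r + r ^ a * h' r) S r :=
      ((Real.hasDerivAt_rpow_const (Or.inl hr0)).hasDerivWithinAt).mul (hdh r hr)
    exact ((h1.const_mul a).add h2)
  have hΦ''eq : ∀ r ∈ S, Φ'' r = Q r := by
    intro r hr
    have hPQ : HasDerivWithinAt Φ' (Q r) S r :=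
      (hQd r hr).congr (fun x hx => hΦ'eq x hx) (hΦ'eq r hr)
    have h1 := (hdΦ' r hr).derivWithin (uniqueDiffOn_Ioc 0 1 r hr)
    have h2 := hPQ.derivWithin (uniqueDiffOn_Ioc 0 1 r hr)
    rw [← h1, ← h2]
  -- positivity of Φ''
  have hΦ''pos : ∀ r ∈ S, 0 < Φ'' r := by
    intro r hr
    rw [hΦ''eq r hr]
    show 0 < a * (((a-1) * r ^ (a-1-1)) * (1 + g r) + r ^ (a-1) * h r)
      + ((a * r ^ (a-1)) * h r + r ^ a * h' r)
    have hr0 : (0:ℝ) < r := hr.1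
    have p1 : (0:ℝ) < r ^ (a-1-1) := Real.rpow_pos_of_pos hr0 _
    have p2 : (0:ℝ) < r ^ (a-1) := Real.rpow_pos_of_pos hr0 _
    have p3 : (0:ℝ) < r ^ a := Real.rpow_pos_of_pos hr0 _
    have hg0' := hg0 r hr
    have hh0' := (hh01 r hr).1
    have hh'0' := hh'0 r hr
    have ha1 : (0:ℝ) < a - 1 := by linarith
    have t1 : (0:ℝ) < ((a-1) * r ^ (a-1-1)) * (1 + g r) := by positivity
    have t2 : (0:ℝ) ≤ r ^ (a-1) * h r := by positivity
    have t3 : (0:ℝ) ≤ (a * r ^ (a-1)) * h r := by positivity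
    have t4 : (0:ℝ) ≤ r ^ a * h' r := by positivity
    nlinarith
  -- Φ' positive and strictly monotone
  have hΦ'pos : ∀ r ∈ S, 0 < Φ' r := by
    intro r hr
    rw [hΦ'eq r hr]
    show 0 < a * (r ^ (a-1) * (1 + g r)) + r ^ a * h r
    have hr0 : (0:ℝ) < r := hr.1
    have p2 : (0:ℝ) < r ^ (a-1) := Real.rpow_pos_of_pos hr0 _
    have p3 : (0:ℝ) < r ^ a := Real.rpow_pos_of_pos hr0 _
    have hg0' := hg0 r hr
    have hh0' := (hh01 r hr).1
    have t1 : (0:ℝ) < a * (r ^ (a-1) * (1 + g r)) := by positivity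
    have t2 : (0:ℝ) ≤ r ^ a * h r := by positivity
    linarith
  have hΦ'mono : StrictMonoOn Φ' S := by
    apply strictMonoOn_of_deriv_pos (convex_Ioc 0 1)
    · exact fun r hr => (hdΦ' r hr).differentiableWithinAt.continuousWithinAt
    · intro x hx
      rw [interior_Ioc] at hx
      have hxS : x ∈ S := ⟨hx.1, hx.2.le⟩
      have hmem : S ∈ 𝓝 x := mem_nhds_iff.mpr ⟨Set.Ioo 0 1, fun y hy => ⟨hy.1, hy.2.le⟩,
        isOpen_Ioo, hx⟩
      have hd : HasDerivAt Φ' (Φ'' x) x := (hdΦ' x hxS).hasDerivAt hmem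
      rw [hd.deriv]
      exact hΦ''pos x hxS
  refine ⟨hΦ''pos, ?_, ?_⟩
  · -- strict monotonicity of r ^ (2N-2) u_r^2
    intro r1 hr1 r2 hr2 hlt
    have key : ∀ r ∈ S, ((N:ℝ) - 1) * (r ^ (2*N-2) * u_r r ^ 2) = r ^ (N+1) * Φ' r := by
      intro r hr
      rw [hΦ'def r hr]
      have : (r:ℝ) ^ (2*N-2) = r ^ (N+1) * r ^ (N-3) := by
        rw [← pow_add]; congr 1; omega
      rw [this]; ring
    have h1 : r1 ^ (N+1) * Φ' r1 < r2 ^ (N+1) * Φ' r2 := by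
      apply mul_lt_mul''
      · exact pow_lt_pow_left₀ hlt hr1.1.le (by omega)
      · exact hΦ'mono hr1 hr2 hlt
      · exact pow_nonneg hr1.1.le _
      · exact (hΦ'pos r1 hr1).le
    have h2 : ((N:ℝ)-1) * (r1 ^ (2*N-2) * u_r r1 ^ 2) < ((N:ℝ)-1) * (r2 ^ (2*N-2) * u_r r2 ^ 2) := by
      rw [key r1 hr1, key r2 hr2]; exact h1
    exact lt_of_mul_lt_mul_left h2 hNR.le
  · -- pointwise bound
    intro r hr
    have hr0 : (0:ℝ) < r := hr.1
    have hr1 : r ≤ 1 := hr.2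
    set e : ℝ := -(N:ℝ) / 2 + Real.sqrt ((N:ℝ) - 1) + 1 with he_def
    have hrpow_pos : (0:ℝ) < r ^ (N-3:ℕ) := pow_pos hr0 _
    have hrepos : (0:ℝ) < r ^ e := Real.rpow_pos_of_pos hr0 _
    -- Φ' r ≤ G * r ^ (a-1)
    have hbound : Φ' r ≤ G * r ^ (a-1) := by
      rw [hΦ'eq r hr]
      show a * (r ^ (a-1) * (1 + g r)) + r ^ a * h r ≤ G * r ^ (a-1)
      rw [hG_def]
      have p2 : (0:ℝ) < r ^ (a-1) := Real.rpow_pos_of_pos hr0 _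
      have hgr : 1 + g r ≤ 2 := by have := hg_le r hr; linarith
      have hra : r ^ a ≤ r ^ (a-1) :=
        Real.rpow_le_rpow_of_exponent_ge hr0 hr1 (by linarith)
      have hh1 := (hh01 r hr).2
      have hh0' := (hh01 r hr).1
      have t1 : a * (r ^ (a-1) * (1 + g r)) ≤ a * (r ^ (a-1) * 2) := by
        apply mul_le_mul_of_nonneg_left _ (by linarith)
        exact mul_le_mul_of_nonneg_left hgr p2.le
      have t2 : r ^ a * h r ≤ r ^ (a-1) := by
        calc r ^ a * h r ≤ r ^ a * 1 := mul_le_mul_of_nonneg_left hh1 (Real.rpow_pos_of_pos hr0 _).le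
          _ = r ^ a := mul_one _
          _ ≤ r ^ (a-1) := hra
      linarith
    -- nat pow to rpow
    have hnat : (r:ℝ) ^ (N-3:ℕ) = r ^ ((N:ℝ) - 3) := by
      rw [← Real.rpow_natCast r (N-3)]
      congr 1
      have : ((N - 3 : ℕ) : ℝ) = (N:ℝ) - 3 := by
        have h3 : (3:ℕ) ≤ N := by omega
        push_cast [Nat.cast_sub h3]; ring
      rw [this]
    have hee : e + e + ((N:ℝ) - 3) = a - 1 := by
      rw [he_def, ha_def]; ring
    have hsum : r ^ e * r ^ e * r ^ ((N:ℝ)-3) = r ^ (a-1) := by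
      rw [← Real.rpow_add hr0, ← Real.rpow_add hr0, hee]
    -- main squared inequality
    have hsq : u_r r ^ 2 ≤ (G / ((N:ℝ)-1)) * (r ^ e * r ^ e) := by
      have hc : (0:ℝ) < ((N:ℝ)-1) * r ^ (N-3:ℕ) := mul_pos hNR hrpow_pos
      apply le_of_mul_le_mul_right _ hc
      have lhs_eq : u_r r ^ 2 * (((N:ℝ)-1) * r ^ (N-3:ℕ)) = Φ' r := by
        rw [hΦ'def r hr]; ring
      rw [lhs_eq]
      have rhs_eq : (G / ((N:ℝ)-1)) * (r ^ e * r ^ e) * (((N:ℝ)-1) * r ^ (N-3:ℕ))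
          = G * r ^ (a-1) := by
        rw [hnat]
        field_simp
        rw [← hsum]; ring
      rw [rhs_eq]
      exact hbound
    have hD2 : Real.sqrt (G / ((N:ℝ)-1)) ^ 2 = G / ((N:ℝ)-1) :=
      Real.sq_sqrt (le_of_lt (div_pos hGpos hNR))
    have hfinal : u_r r ^ 2 ≤ (Real.sqrt (G / ((N:ℝ)-1)) * r ^ e) ^ 2 := by
      rw [mul_pow, hD2, pow_two (r ^ e)]
      exact hsq
    have := Real.sqrt_le_sqrt hfinal
    rw [Real.sqrt_sq_eq_abs, Real.sqrt_sq_eq_abs] at this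
    calc |u_r r| ≤ |Real.sqrt (G / ((N:ℝ)-1)) * r ^ e| := this
      _ = Real.sqrt (G / ((N:ℝ)-1)) * r ^ e := abs_of_nonneg (by positivity)
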